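/- Let k be a kernel on X and φ(z) = ∑_n a_n z^n with all a_n > 0 and ∑_n a_n k(x,x)^n < ∞ for all x. If X is finitely separated by H_k (i.e., for every finite set of distinct points x_1,…,x_n in X there exists ψ ∈ H_k with ψ(x_i) ≠ ψ(x_j) for i ≠ j), then the kernel φ∘k : (x,y) ↦ ∑_n a_n k(x,y)^n is strictly positive definite. -/

import Mathlib

open scoped ComplexOrder ComplexConjugate InnerProductSpace

/-- `k` is a kernel function on `X`: self-adjoint and positive semi-definite. -/
def IsKernel {X : Type*} (k : X → X → ℂ) : Prop :=
  (∀ x y, k y x = conj (k x y)) ∧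
  ∀ (n : ℕ) (x : Fin n → X) (c : Fin n → ℂ),
    0 ≤ ∑ i, ∑ j, c i * conj (c j) * k (x i) (x j)

/-- `k` is strictly positive definite on `X`. -/
def IsStrictPosKernel {X : Type*} (k : X → X → ℂ) : Prop :=
  ∀ (n : ℕ) (x : Fin n → X), Function.Injective x →
    ∀ c : Fin n → ℂ, c ≠ 0 →
      0 < ∑ i, ∑ j, c i * conj (c j) * k (x i) (x j)

lemma pow_sum_conj_mul {β : Type*} [Fintype β] [DecidableEq β]
    (z w : β → ℂ) (m : ℕ) :
    (∑ b, conj (z b) * w b) ^ m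
      = ∑ f : Fin m → β, (∏ t, conj (z (f t))) * ∏ t, w (f t) := by
  calc (∑ b, conj (z b) * w b) ^ m
      = ∏ _t : Fin m, ∑ b, conj (z b) * w b := by
        simp [Finset.prod_const]
    _ = ∑ f ∈ Fintype.piFinset (fun _ : Fin m => (Finset.univ : Finset β)),
          ∏ t, conj (z (f t)) * w (f t) := Finset.prod_univ_sum _ _
    _ = ∑ f : Fin m → β, (∏ t, conj (z (f t))) * ∏ t, w (f t) := by
        rw [Fintype.piFinset_univ]
        exact Finset.sum_congr rfl fun f _ => by
          rw [Finset.prod_mul_distrib]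

/-- Let `k` be a kernel on `X` with `φ(z) = ∑ aₙ zⁿ`, all `aₙ > 0`, and
`∑ aₙ k(x,x)ⁿ < ∞` for all `x`.  The RKHS `H_k` is realized as the functions
`x ↦ ⟪v, Φ x⟫` associated to a feature map `Φ : X → H` with `k x y = ⟪Φ y, Φ x⟫`.
If `X` is finitely separated by `H_k`, then `φ ∘ k : (x,y) ↦ ∑ aₙ k(x,y)ⁿ` is
strictly positive definite. -/
theorem tsum_pow_isStrictPosKernel_of_finitelySeparated
    {X : Type*} (k : X → X → ℂ) (hk : IsKernel k)
    (a : ℕ → ℝ) (ha : ∀ n, 0 < a n)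
    (hsum : ∀ x : X, Summable (fun n => a n * (k x x).re ^ n))
    (H : Type*) [NormedAddCommGroup H] [InnerProductSpace ℂ H] [CompleteSpace H]
    (Φ : X → H) (hΦ : ∀ x y, k x y = ⟪Φ y, Φ x⟫_ℂ)
    (hsep : ∀ (n : ℕ) (x : Fin n → X), Function.Injective x →
      ∃ v : H, ∀ i j, i ≠ j → ⟪v, Φ (x i)⟫_ℂ ≠ ⟪v, Φ (x j)⟫_ℂ) :
    IsStrictPosKernel (fun x y => ∑' n, (a n : ℂ) * k x y ^ n) := by
  intro n x hx c hc
  obtain ⟨v, hv⟩ := hsep n x hx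
  classical
  -- the Gram matrix of (v, Φ (x 0), …, Φ (x (n-1)))
  set y : Fin (n + 1) → H := Fin.cons v (fun i => Φ (x i)) with hy
  set M : Matrix (Fin (n + 1)) (Fin (n + 1)) ℂ :=
    Matrix.of (fun p q => ⟪y p, y q⟫_ℂ) with hMdef
  have hM : M.PosSemidef := by
    rw [Matrix.posSemidef_iff_dotProduct_mulVec]
    constructor
    · ext p q
      simp [hMdef, Matrix.conjTranspose_apply, inner_conj_symm, RCLike.star_def]
    · intro d
      have lhs : dotProduct (star d) (M.mulVec d)
          = ∑ p, (starRingEnd ℂ) (d p) * ∑ q, ⟪y p, y q⟫_ℂ * d q := rfl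
      have h1 : dotProduct (star d) (M.mulVec d)
          = ⟪∑ p, d p • y p, ∑ p, d p • y p⟫_ℂ := by
        rw [lhs, sum_inner (𝕜 := ℂ)]
        simp only [inner_smul_left (𝕜 := ℂ), inner_sum (𝕜 := ℂ), inner_smul_right (𝕜 := ℂ),
          Finset.mul_sum]
        refine Finset.sum_congr rfl fun p _ => Finset.sum_congr rfl fun q _ => by ring
      rw [h1, Complex.nonneg_iff]
      constructor
      · exact inner_self_nonneg (𝕜 := ℂ) (x := ∑ p, d p • y p)
      · exact (inner_self_im (𝕜 := ℂ) (x := ∑ p, d p • y p)).symm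
  obtain ⟨B, hB⟩ : ∃ B : Matrix (Fin (n + 1)) (Fin (n + 1)) ℂ, M = B.conjTranspose * B := by
    open scoped MatrixOrder in
    exact CStarAlgebra.nonneg_iff_eq_star_mul_self.mp hM.nonneg
  have hMB : ∀ p q, M p q = ∑ b, conj (B b p) * B b q := by
    intro p q
    rw [hB]
    simp [Matrix.mul_apply, Matrix.conjTranspose_apply, RCLike.star_def]
  set t : Fin n → ℂ := fun i => ⟪v, Φ (x i)⟫_ℂ with ht
  set g : Fin (n + 1) → Fin (n + 1) → ℂ := fun p b => B b p with hg
  have hkM : ∀ i j : Fin n, k (x i) (x j) = ∑ b, conj (g j.succ b) * g i.succ b := by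
    intro i j
    rw [hΦ]
    have h2 : ⟪Φ (x j), Φ (x i)⟫_ℂ = M j.succ i.succ := by simp [hMdef, hy]
    rw [h2, hMB]
  have htM : ∀ i : Fin n, t i = ∑ b, conj (g 0 b) * g i.succ b := by
    intro i
    have h2 : t i = M 0 i.succ := by simp [ht, hMdef, hy]
    rw [h2, hMB]
  set G : (m : ℕ) → (Fin m → Fin (n + 1)) → ℂ :=
    fun m f => ∑ i, c i * ∏ t', g i.succ (f t') with hG
  -- the m-th quadratic form as a sum of |G|^2
  have hS : ∀ m : ℕ, (∑ i, ∑ j, c i * conj (c j) * k (x i) (x j) ^ m)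
      = ∑ f : Fin m → Fin (n + 1), G m f * conj (G m f) := by
    intro m
    calc ∑ i, ∑ j, c i * conj (c j) * k (x i) (x j) ^ m
        = ∑ i, ∑ j, ∑ f : Fin m → Fin (n + 1),
            (c i * ∏ t', g i.succ (f t')) *
              (conj (c j) * ∏ t', conj (g j.succ (f t'))) := by
          refine Finset.sum_congr rfl fun i _ => Finset.sum_congr rfl fun j _ => ?_
          rw [hkM i j, pow_sum_conj_mul, Finset.mul_sum]
          exact Finset.sum_congr rfl fun f _ => by ring
      _ = ∑ i : Fin n, ∑ f : Fin m → Fin (n + 1), ∑ j : Fin n,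
            (c i * ∏ t', g i.succ (f t')) *
              (conj (c j) * ∏ t', conj (g j.succ (f t'))) :=
          Finset.sum_congr rfl fun i _ => Finset.sum_comm
      _ = ∑ f : Fin m → Fin (n + 1), ∑ i : Fin n, ∑ j : Fin n,
            (c i * ∏ t', g i.succ (f t')) *
              (conj (c j) * ∏ t', conj (g j.succ (f t'))) := Finset.sum_comm
      _ = ∑ f : Fin m → Fin (n + 1), G m f * conj (G m f) := by
          refine Finset.sum_congr rfl fun f _ => ?_
          rw [← Finset.sum_mul_sum Finset.univ Finset.univ
            (fun i : Fin n => c i * ∏ t', g i.succ (f t'))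
            (fun j : Fin n => conj (c j) * ∏ t', conj (g j.succ (f t')))]
          simp only [hG, map_sum, map_mul, map_prod]
  have hT : ∀ m : ℕ, (∑ i, c i * t i ^ m)
      = ∑ f : Fin m → Fin (n + 1), (∏ t', conj (g 0 (f t'))) * G m f := by
    intro m
    calc ∑ i, c i * t i ^ m
        = ∑ i, ∑ f : Fin m → Fin (n + 1),
            (∏ t', conj (g 0 (f t'))) * (c i * ∏ t', g i.succ (f t')) := by
          refine Finset.sum_congr rfl fun i _ => ?_
          rw [htM i, pow_sum_conj_mul, Finset.mul_sum]
          exact Finset.sum_congr rfl fun f _ => by ring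
      _ = ∑ f : Fin m → Fin (n + 1), ∑ i,
            (∏ t', conj (g 0 (f t'))) * (c i * ∏ t', g i.succ (f t')) := Finset.sum_comm
      _ = ∑ f : Fin m → Fin (n + 1), (∏ t', conj (g 0 (f t'))) * G m f := by
          refine Finset.sum_congr rfl fun f _ => ?_
          rw [hG, Finset.mul_sum]
  set s : ℕ → ℝ := fun m => ∑ f : Fin m → Fin (n + 1), Complex.normSq (G m f) with hs
  have hs_nonneg : ∀ m, 0 ≤ s m := fun m =>
    Finset.sum_nonneg fun f _ => Complex.normSq_nonneg _
  have hSs : ∀ m : ℕ, (∑ i, ∑ j, c i * conj (c j) * k (x i) (x j) ^ m) = ((s m : ℝ) : ℂ) := by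
    intro m
    rw [hS m, hs]
    simp only [Complex.mul_conj]
    push_cast
    rfl
  -- summability
  have hkxx : ∀ p : X, (k p p).re = ‖Φ p‖ ^ 2 := by
    intro p
    rw [hΦ]
    simpa using inner_self_eq_norm_sq (𝕜 := ℂ) (Φ p)
  have hsum' : ∀ p : X, Summable (fun m => a m * (‖Φ p‖ ^ 2) ^ m) := by
    intro p; simpa only [hkxx p] using hsum p
  have hnorm : ∀ p q : X, ‖k p q‖ ≤ max (‖Φ p‖ ^ 2) (‖Φ q‖ ^ 2) := by
    intro p q
    rw [hΦ]
    refine (norm_inner_le_norm _ _).trans ?_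
    rcases le_total ‖Φ p‖ ‖Φ q‖ with h | h
    · exact le_max_of_le_right (by nlinarith [norm_nonneg (Φ p), norm_nonneg (Φ q)])
    · exact le_max_of_le_left (by nlinarith [norm_nonneg (Φ p), norm_nonneg (Φ q)])
  have hsumC : ∀ i j : Fin n, Summable (fun m => (a m : ℂ) * k (x i) (x j) ^ m) := by
    intro i j
    apply Summable.of_norm
    refine Summable.of_nonneg_of_le (fun m => norm_nonneg _) (fun m => ?_)
      ((hsum' (x i)).add (hsum' (x j)))
    rw [norm_mul, norm_pow, Complex.norm_real, Real.norm_of_nonneg (ha m).le]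
    have h1 : ‖k (x i) (x j)‖ ^ m ≤ (max (‖Φ (x i)‖ ^ 2) (‖Φ (x j)‖ ^ 2)) ^ m :=
      pow_le_pow_left₀ (norm_nonneg _) (hnorm _ _) m
    have h2 : (max (‖Φ (x i)‖ ^ 2) (‖Φ (x j)‖ ^ 2)) ^ m
        ≤ (‖Φ (x i)‖ ^ 2) ^ m + (‖Φ (x j)‖ ^ 2) ^ m := by
      rcases max_cases (‖Φ (x i)‖ ^ 2) (‖Φ (x j)‖ ^ 2) with ⟨hm, _⟩ | ⟨hm, _⟩ <;> rw [hm]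
      · nlinarith [pow_nonneg (sq_nonneg ‖Φ (x j)‖) m]
      · nlinarith [pow_nonneg (sq_nonneg ‖Φ (x i)‖) m]
    calc a m * ‖k (x i) (x j)‖ ^ m
        ≤ a m * ((‖Φ (x i)‖ ^ 2) ^ m + (‖Φ (x j)‖ ^ 2) ^ m) :=
          mul_le_mul_of_nonneg_left (h1.trans h2) (ha m).le
      _ = a m * (‖Φ (x i)‖ ^ 2) ^ m + a m * (‖Φ (x j)‖ ^ 2) ^ m := mul_add _ _ _
  have hsm : ∀ i j : Fin n,
      Summable (fun m => c i * conj (c j) * ((a m : ℂ) * k (x i) (x j) ^ m)) :=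
    fun i j => (hsumC i j).mul_left _
  have hsm2 : ∀ i : Fin n,
      Summable (fun m => ∑ j, c i * conj (c j) * ((a m : ℂ) * k (x i) (x j) ^ m)) :=
    fun i => summable_sum fun j _ => hsm i j
  have hfun : ∀ m : ℕ, (∑ i, ∑ j, c i * conj (c j) * ((a m : ℂ) * k (x i) (x j) ^ m))
      = ((a m * s m : ℝ) : ℂ) := by
    intro m
    have h1 : (∑ i, ∑ j, c i * conj (c j) * ((a m : ℂ) * k (x i) (x j) ^ m))
        = (a m : ℂ) * ∑ i, ∑ j, c i * conj (c j) * k (x i) (x j) ^ m := by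
      rw [Finset.mul_sum]
      refine Finset.sum_congr rfl fun i _ => ?_
      rw [Finset.mul_sum]
      exact Finset.sum_congr rfl fun j _ => by ring
    rw [h1, hSs m]
    push_cast
    ring
  have key : (∑ i, ∑ j, c i * conj (c j) * ∑' m, (a m : ℂ) * k (x i) (x j) ^ m)
      = ∑' m : ℕ, ((a m * s m : ℝ) : ℂ) := by
    calc ∑ i, ∑ j, c i * conj (c j) * ∑' m, (a m : ℂ) * k (x i) (x j) ^ m
        = ∑ i, ∑ j, ∑' m, c i * conj (c j) * ((a m : ℂ) * k (x i) (x j) ^ m) :=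
          Finset.sum_congr rfl fun i _ => Finset.sum_congr rfl fun j _ => tsum_mul_left.symm
      _ = ∑ i, ∑' m, ∑ j, c i * conj (c j) * ((a m : ℂ) * k (x i) (x j) ^ m) :=
          Finset.sum_congr rfl fun i _ => (Summable.tsum_finsetSum fun j _ => hsm i j).symm
      _ = ∑' m, ∑ i, ∑ j, c i * conj (c j) * ((a m : ℂ) * k (x i) (x j) ^ m) :=
          (Summable.tsum_finsetSum fun i _ => hsm2 i).symm
      _ = ∑' m : ℕ, ((a m * s m : ℝ) : ℂ) := tsum_congr hfun
  have hsumR : Summable (fun m => a m * s m) := by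
    have h := summable_sum (s := (Finset.univ : Finset (Fin n))) (fun i _ => hsm2 i)
    rw [show (fun m => ∑ i, ∑ j, c i * conj (c j) * ((a m : ℂ) * k (x i) (x j) ^ m))
        = (fun m => ((a m * s m : ℝ) : ℂ)) from funext hfun] at h
    exact Complex.summable_ofReal.mp h
  -- existence of a positive term
  have hexists : ∃ m : ℕ, s m ≠ 0 := by
    by_contra hall
    push_neg at hall
    have hG0 : ∀ (m : ℕ) (f : Fin m → Fin (n + 1)), G m f = 0 := by
      intro m f
      have h0 : ∑ f : Fin m → Fin (n + 1), Complex.normSq (G m f) = 0 := hall m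
      have := (Finset.sum_eq_zero_iff_of_nonneg
        (fun f _ => Complex.normSq_nonneg (G m f))).mp h0 f (Finset.mem_univ f)
      exact Complex.normSq_eq_zero.mp this
    have hT0 : ∀ m : ℕ, (∑ i, c i * t i ^ m) = 0 := by
      intro m
      rw [hT m]
      exact Finset.sum_eq_zero fun f _ => by rw [hG0 m f, mul_zero]
    have hdet : (Matrix.vandermonde t).transpose.det ≠ 0 := by
      rw [Matrix.det_transpose, Matrix.det_vandermonde]
      refine Finset.prod_ne_zero_iff.mpr fun i _ => Finset.prod_ne_zero_iff.mpr fun j hj => ?_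
      rw [sub_ne_zero]
      exact hv j i (Finset.mem_Ioi.mp hj).ne'
    have hmv : (Matrix.vandermonde t).transpose.mulVec c = 0 := by
      funext m
      have h3 := hT0 (m : ℕ)
      have h4 : (Matrix.vandermonde t).transpose.mulVec c m
          = ∑ i, t i ^ (m : ℕ) * c i := rfl
      rw [h4, Pi.zero_apply, ← h3]
      exact Finset.sum_congr rfl fun i _ => mul_comm _ _
    exact hc (Matrix.eq_zero_of_mulVec_eq_zero hdet hmv)
  obtain ⟨m0, hm0⟩ := hexists
  have hpos : 0 < ∑' m, a m * s m :=
    Summable.tsum_pos hsumR (fun m => mul_nonneg (ha m).le (hs_nonneg m)) m0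
      (mul_pos (ha m0) (lt_of_le_of_ne (hs_nonneg m0) (Ne.symm hm0)))
  show 0 < ∑ i, ∑ j, c i * conj (c j) * ∑' m, (a m : ℂ) * k (x i) (x j) ^ m
  rw [key, ← Complex.ofReal_tsum]
  exact Complex.zero_lt_real.mpr hpos
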